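/- Let p ≥ 1 and let ⋆ denote circular convolution on ℝ^p, (a ⋆ b)_r = Σ_{s=0}^{p−1} a_s b_{(r−s) mod p}, with filters of length n ≤ p acting after zero-padding to length p. Fix channel counts c₀, c₁, c₂ ≥ 1 and filter lengths n_u, n_v ≤ p, and let the parameter be θ = ((u_{k,j})_{1≤k≤c₂, 1≤j≤c₁}, (v_{j,i})_{1≤j≤c₁, 1≤i≤c₀}) with u_{k,j} ∈ ℝ^{n_u} and v_{j,i} ∈ ℝ^{n_v}. For x = (x^{(1)}, …, x^{(c₀)}) ∈ (ℝ^p)^{c₀} define the two-layer multi-channel convolutive ReLU network g(θ, x) = (Σ_{j=1}^{c₁} u_{k,j} ⋆ σ(Σ_{i=1}^{c₀} v_{j,i} ⋆ x^{(i)}))_{k=1}^{c₂} ∈ (ℝ^p)^{c₂}, where σ(t) = max(t, 0) is applied entrywise. For each j ∈ {1, …, c₁} define h_j(θ) = Σ_{k=1}^{c₂} ‖u_{k,j}‖² − Σ_{i=1}^{c₀} ‖v_{j,i}‖². Then for every θ, every input x such that every entry of every hidden pre-activation Σ_{i} v_{j',i} ⋆ x^{(i)} (j' = 1, …, c₁)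 is nonzero, and every w ∈ (ℝ^p)^{c₂}, the map θ' ↦ g(θ', x) is differentiable at θ and ⟨∇h_j(θ), ∂_θ g(θ, x)ᵀ w⟩ = 0; i.e., each h_j is a conservation law of the multi-channel convolutive two-layer ReLU network under Euclidean gradient flow. -/

import Mathlib

/-- Circular convolution on `ℝ^p`: `(a ⋆ b)_r = ∑ₛ a_s b_{(r−s) mod p}` (subtraction
taken in `Fin p`, i.e. mod `p`). -/
def circConv (p : ℕ) (a b : Fin p → ℝ) : Fin p → ℝ :=
  fun r => ∑ s, a s * b (r - s)

/-- Zero-padding of a filter of length `n` to length `p`. -/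
def zeroPad (p n : ℕ) (a : Fin n → ℝ) : Fin p → ℝ :=
  fun s => if h : (s : ℕ) < n then a ⟨s, h⟩ else 0

/-- Second-layer filter `u_{k,j} ∈ ℝ^{n_u}` extracted from the parameter vector. -/
def uFilt {c₀ c₁ c₂ nu nv : ℕ}
    (θ : EuclideanSpace ℝ ((Fin c₂ × Fin c₁ × Fin nu) ⊕ (Fin c₁ × Fin c₀ × Fin nv)))
    (k : Fin c₂) (j : Fin c₁) : Fin nu → ℝ :=
  fun t => θ (Sum.inl (k, j, t))

/-- First-layer filter `v_{j,i} ∈ ℝ^{n_v}` extracted from the parameter vector. -/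
def vFilt {c₀ c₁ c₂ nu nv : ℕ}
    (θ : EuclideanSpace ℝ ((Fin c₂ × Fin c₁ × Fin nu) ⊕ (Fin c₁ × Fin c₀ × Fin nv)))
    (j : Fin c₁) (i : Fin c₀) : Fin nv → ℝ :=
  fun t => θ (Sum.inr (j, i, t))

/-- Hidden pre-activation `∑ᵢ v_{j,i} ⋆ x^{(i)} ∈ ℝ^p` of channel `j`. -/
def preAct (p : ℕ) {c₀ c₁ c₂ nu nv : ℕ}
    (θ : EuclideanSpace ℝ ((Fin c₂ × Fin c₁ × Fin nu) ⊕ (Fin c₁ × Fin c₀ × Fin nv)))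
    (x : Fin c₀ → Fin p → ℝ) (j : Fin c₁) : Fin p → ℝ :=
  fun r => ∑ i, circConv p (zeroPad p nv (vFilt θ j i)) (x i) r

/-- The two-layer multi-channel convolutive ReLU network
`g(θ, x) = (∑ⱼ u_{k,j} ⋆ σ(∑ᵢ v_{j,i} ⋆ x^{(i)}))_{k=1}^{c₂}`,
with `σ(t) = max(t, 0)` applied entrywise. -/
noncomputable def convNet (p : ℕ) {c₀ c₁ c₂ nu nv : ℕ}
    (θ : EuclideanSpace ℝ ((Fin c₂ × Fin c₁ × Fin nu) ⊕ (Fin c₁ × Fin c₀ × Fin nv)))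
    (x : Fin c₀ → Fin p → ℝ) : EuclideanSpace ℝ (Fin c₂ × Fin p) :=
  (EuclideanSpace.equiv (Fin c₂ × Fin p) ℝ).symm fun q =>
    ∑ j, circConv p (zeroPad p nu (uFilt θ q.1 j)) (fun r => max (preAct p θ x j r) 0) q.2

section Aux

variable {c₀ c₁ c₂ nu nv : ℕ}

/-- Parameter space abbreviation. -/
abbrev Par (c₀ c₁ c₂ nu nv : ℕ) :=
  EuclideanSpace ℝ ((Fin c₂ × Fin c₁ × Fin nu) ⊕ (Fin c₁ × Fin c₀ × Fin nv))

/-- The linear functional `θ' ↦ zeroPad p nu (uFilt θ' k j') t`. -/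
noncomputable def Ulin (c₀ c₁ c₂ nu nv : ℕ) (k : Fin c₂) (j' : Fin c₁) (t : ℕ) :
    Par c₀ c₁ c₂ nu nv →L[ℝ] ℝ :=
  if h : t < nu then EuclideanSpace.proj (Sum.inl (k, j', ⟨t, h⟩)) else 0

noncomputable def Vlin (c₀ c₁ c₂ nu nv : ℕ) (j' : Fin c₁) (i : Fin c₀) (t : ℕ) :
    Par c₀ c₁ c₂ nu nv →L[ℝ] ℝ :=
  if h : t < nv then EuclideanSpace.proj (Sum.inr (j', i, ⟨t, h⟩)) else 0

noncomputable def Plin (c₀ c₁ c₂ nu nv : ℕ) (p : ℕ) (x : Fin c₀ → Fin p → ℝ)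
    (j' : Fin c₁) (r : Fin p) : Par c₀ c₁ c₂ nu nv →L[ℝ] ℝ :=
  ∑ i, ∑ t : Fin p, x i (r - t) • Vlin c₀ c₁ c₂ nu nv j' i (t : ℕ)

lemma Ulin_apply (θ' : Par c₀ c₁ c₂ nu nv) (k : Fin c₂) (j' : Fin c₁) {p : ℕ} (t : Fin p) :
    zeroPad p nu (uFilt θ' k j') t = Ulin c₀ c₁ c₂ nu nv k j' (t : ℕ) θ' := by
  unfold zeroPad Ulin uFilt
  split <;> simp_all

lemma Vlin_apply (θ' : Par c₀ c₁ c₂ nu nv) (j' : Fin c₁) (i : Fin c₀) {p : ℕ} (t : Fin p) :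
    zeroPad p nv (vFilt θ' j' i) t = Vlin c₀ c₁ c₂ nu nv j' i (t : ℕ) θ' := by
  unfold zeroPad Vlin vFilt
  split <;> simp_all

lemma Plin_apply (θ' : Par c₀ c₁ c₂ nu nv) {p : ℕ} (x : Fin c₀ → Fin p → ℝ)
    (j' : Fin c₁) (r : Fin p) :
    preAct p θ' x j' r = Plin c₀ c₁ c₂ nu nv p x j' r θ' := by
  unfold preAct circConv Plin
  simp only [ContinuousLinearMap.coe_sum', Finset.sum_apply,
    ContinuousLinearMap.coe_smul', Pi.smul_apply, smul_eq_mul]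
  refine Finset.sum_congr rfl fun i _ => Finset.sum_congr rfl fun t _ => ?_
  rw [Vlin_apply, mul_comm]

end Aux

open scoped Classical in
/-- The functions `h_j(θ) = ∑ₖ ‖u_{k,j}‖² − ∑ᵢ ‖v_{j,i}‖²` are conservation laws of the
two-layer multi-channel convolutive ReLU network: for every parameter `θ`, every input
`x` such that no entry of any hidden pre-activation vanishes, and every `w`, the network
is differentiable in `θ` and `⟨∇h_j(θ), ∂_θ g(θ, x)ᵀ w⟩ = 0`. -/
theorem conv_relu_conservation_laws
    (p c₀ c₁ c₂ nu nv : ℕ) (hp : 1 ≤ p) (hc₀ : 1 ≤ c₀) (hc₁ : 1 ≤ c₁) (hc₂ : 1 ≤ c₂)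
    (hnu : nu ≤ p) (hnv : nv ≤ p) (hnu1 : 1 ≤ nu) (hnv1 : 1 ≤ nv)
    (θ : EuclideanSpace ℝ ((Fin c₂ × Fin c₁ × Fin nu) ⊕ (Fin c₁ × Fin c₀ × Fin nv)))
    (x : Fin c₀ → Fin p → ℝ)
    (hx : ∀ (j' : Fin c₁) (r : Fin p), preAct p θ x j' r ≠ 0)
    (j : Fin c₁) (w : EuclideanSpace ℝ (Fin c₂ × Fin p)) :
    DifferentiableAt ℝ (fun θ' => convNet p θ' x) θ ∧
    inner ℝ (gradient
        (fun θ' => (∑ k, ∑ t, (uFilt θ' k j t) ^ 2) - ∑ i, ∑ t, (vFilt θ' j i t) ^ 2) θ)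
      ((fderiv ℝ (fun θ' => convNet p θ' x) θ).adjoint w) = (0:ℝ) := by
  classical
  -- sign pattern of hidden units at θ
  set s : Fin c₁ → Fin p → ℝ := fun j' r => if 0 < preAct p θ x j' r then 1 else 0 with hs
  -- the "linearized" network
  set F : Par c₀ c₁ c₂ nu nv → (Fin c₂ × Fin p) → ℝ := fun θ' q =>
    ∑ j', ∑ t : Fin p, Ulin c₀ c₁ c₂ nu nv q.1 j' (t : ℕ) θ' *
      (s j' (q.2 - t) • Plin c₀ c₁ c₂ nu nv p x j' (q.2 - t)) θ' with hF
  set G : Par c₀ c₁ c₂ nu nv → EuclideanSpace ℝ (Fin c₂ × Fin p) := fun θ' =>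
    (EuclideanSpace.equiv (Fin c₂ × Fin p) ℝ).symm (F θ') with hG
  -- its derivative
  set Dq : (Fin c₂ × Fin p) → (Par c₀ c₁ c₂ nu nv →L[ℝ] ℝ) := fun q =>
    ∑ j', ∑ t : Fin p,
      (Ulin c₀ c₁ c₂ nu nv q.1 j' (t : ℕ) θ •
          (s j' (q.2 - t) • Plin c₀ c₁ c₂ nu nv p x j' (q.2 - t)) +
        (s j' (q.2 - t) • Plin c₀ c₁ c₂ nu nv p x j' (q.2 - t)) θ •
          Ulin c₀ c₁ c₂ nu nv q.1 j' (t : ℕ)) with hDq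
  set A : Par c₀ c₁ c₂ nu nv →L[ℝ] EuclideanSpace ℝ (Fin c₂ × Fin p) :=
    ((EuclideanSpace.equiv (Fin c₂ × Fin p) ℝ).symm :
        ((Fin c₂ × Fin p) → ℝ) →L[ℝ] EuclideanSpace ℝ (Fin c₂ × Fin p)).comp
      (ContinuousLinearMap.pi Dq) with hA
  have hFd : HasFDerivAt F (ContinuousLinearMap.pi Dq) θ := by
    rw [hF, hDq]
    apply hasFDerivAt_pi.2
    intro q
    apply HasFDerivAt.fun_sum
    intro j' _
    apply HasFDerivAt.fun_sum
    intro t _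
    exact (Ulin c₀ c₁ c₂ nu nv q.1 j' (t : ℕ)).hasFDerivAt.mul
      ((s j' (q.2 - t) • Plin c₀ c₁ c₂ nu nv p x j' (q.2 - t)).hasFDerivAt)
  have hGd : HasFDerivAt G A θ := by
    rw [hG, hA]
    exact (((EuclideanSpace.equiv (Fin c₂ × Fin p) ℝ).symm :
        ((Fin c₂ × Fin p) → ℝ) →L[ℝ] EuclideanSpace ℝ (Fin c₂ × Fin p)).hasFDerivAt).comp θ hFd
  -- local agreement of convNet with G
  have hev : ∀ᶠ θ' in nhds θ, ∀ (j' : Fin c₁) (r : Fin p),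
      max (preAct p θ' x j' r) 0 = s j' r * preAct p θ' x j' r := by
    rw [Filter.eventually_all]; intro j'
    rw [Filter.eventually_all]; intro r
    rcases (hx j' r).lt_or_gt with hneg | hpos
    · have : ∀ᶠ θ' in nhds θ, preAct p θ' x j' r < 0 := by
        have hc : Continuous fun θ' : Par c₀ c₁ c₂ nu nv =>
            preAct p θ' x j' r := by
          simp only [Plin_apply]
          exact (Plin c₀ c₁ c₂ nu nv p x j' r).continuous
        exact hc.continuousAt.eventually_lt_const hneg
      refine this.mono fun θ' h' => ?_
      rw [max_eq_right h'.le, hs]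
      simp [not_lt.2 hneg.le]
    · have : ∀ᶠ θ' in nhds θ, 0 < preAct p θ' x j' r := by
        have hc : Continuous fun θ' : Par c₀ c₁ c₂ nu nv =>
            preAct p θ' x j' r := by
          simp only [Plin_apply]
          exact (Plin c₀ c₁ c₂ nu nv p x j' r).continuous
        exact hc.continuousAt.eventually_const_lt hpos
      refine this.mono fun θ' h' => ?_
      rw [max_eq_left h'.le, hs]
      simp [hpos]
  have hEq : (fun θ' => convNet p θ' x) =ᶠ[nhds θ] G := by
    refine hev.mono fun θ' h' => ?_
    rw [hG]
    unfold convNet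
    refine congrArg _ (funext fun q => ?_)
    rw [hF]
    unfold circConv
    refine Finset.sum_congr rfl fun j' _ => Finset.sum_congr rfl fun t _ => ?_
    show zeroPad p nu (uFilt θ' q.1 j') t * max (preAct p θ' x j' (q.2 - t)) 0 = _
    rw [Ulin_apply, h' j' (q.2 - t), Plin_apply]
    simp [mul_assoc]
  have hconv : HasFDerivAt (fun θ' => convNet p θ' x) A θ :=
    hGd.congr_of_eventuallyEq hEq
  refine ⟨hconv.differentiableAt, ?_⟩
  -- the gradient of h
  set G0 : Par c₀ c₁ c₂ nu nv :=
    (EuclideanSpace.equiv _ ℝ).symm (fun q => Sum.elim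
      (fun a : Fin c₂ × Fin c₁ × Fin nu => if a.2.1 = j then 2 * θ (Sum.inl a) else 0)
      (fun b : Fin c₁ × Fin c₀ × Fin nv => if b.1 = j then -(2 * θ (Sum.inr b)) else 0) q)
      with hG0
  have hG0app : ∀ q, G0 q = Sum.elim
      (fun a : Fin c₂ × Fin c₁ × Fin nu => if a.2.1 = j then 2 * θ (Sum.inl a) else 0)
      (fun b : Fin c₁ × Fin c₀ × Fin nv => if b.1 = j then -(2 * θ (Sum.inr b)) else 0) q :=
    fun q => rfl
  set L : Par c₀ c₁ c₂ nu nv →L[ℝ] ℝ :=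
    (∑ k, ∑ t, ((2:ℝ) * θ (Sum.inl (k, j, t))) • EuclideanSpace.proj (Sum.inl (k, j, t))) -
      ∑ i, ∑ t, ((2:ℝ) * θ (Sum.inr (j, i, t))) • EuclideanSpace.proj (Sum.inr (j, i, t))
      with hL
  have hLd : HasFDerivAt
      (fun θ' : Par c₀ c₁ c₂ nu nv =>
        (∑ k, ∑ t, (uFilt θ' k j t) ^ 2) - ∑ i, ∑ t, (vFilt θ' j i t) ^ 2) L θ := by
    rw [hL]
    have hsq : ∀ q : ((Fin c₂ × Fin c₁ × Fin nu) ⊕ (Fin c₁ × Fin c₀ × Fin nv)),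
        HasFDerivAt (fun θ' : Par c₀ c₁ c₂ nu nv => θ' q ^ 2)
          (((2:ℝ) * θ q) • (EuclideanSpace.proj q : Par c₀ c₁ c₂ nu nv →L[ℝ] ℝ)) θ := by
      intro q
      have h := ((EuclideanSpace.proj q : Par c₀ c₁ c₂ nu nv →L[ℝ] ℝ).hasFDerivAt (x := θ)).fun_mul
        ((EuclideanSpace.proj q : Par c₀ c₁ c₂ nu nv →L[ℝ] ℝ).hasFDerivAt (x := θ))
      simpa [pow_two, two_mul, add_smul, PiLp.proj_apply] using h
    exact HasFDerivAt.sub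
      (HasFDerivAt.fun_sum fun k _ => HasFDerivAt.fun_sum fun t _ => hsq (Sum.inl (k, j, t)))
      (HasFDerivAt.fun_sum fun i _ => HasFDerivAt.fun_sum fun t _ => hsq (Sum.inr (j, i, t)))
  have hLG0 : (InnerProductSpace.toDual ℝ (Par c₀ c₁ c₂ nu nv)) G0 = L := by
    apply ContinuousLinearMap.ext
    intro d
    rw [InnerProductSpace.toDual_apply_apply]
    rw [PiLp.inner_apply]
    simp only [RCLike.inner_apply, starRingEnd_apply, star_trivial]
    rw [Fintype.sum_sum_type]
    rw [hL]
    simp only [ContinuousLinearMap.coe_sub', Pi.sub_apply, ContinuousLinearMap.coe_sum',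
      Finset.sum_apply, ContinuousLinearMap.coe_smul', Pi.smul_apply,
      PiLp.proj_apply, smul_eq_mul]
    have h1 : ∑ a : Fin c₂ × Fin c₁ × Fin nu, G0 (Sum.inl a) * d (Sum.inl a)
        = ∑ k, ∑ t, (2 * θ (Sum.inl (k, j, t))) * d (Sum.inl (k, j, t)) := by
      simp only [hG0app, Sum.elim_inl]
      rw [Fintype.sum_prod_type]
      refine Finset.sum_congr rfl fun k _ => ?_
      rw [Fintype.sum_prod_type]
      rw [Finset.sum_comm]
      refine Finset.sum_congr rfl fun t _ => ?_
      simp [ite_mul]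
    have h2 : ∑ b : Fin c₁ × Fin c₀ × Fin nv, G0 (Sum.inr b) * d (Sum.inr b)
        = -∑ i, ∑ t, (2 * θ (Sum.inr (j, i, t))) * d (Sum.inr (j, i, t)) := by
      simp only [hG0app, Sum.elim_inr]
      rw [Fintype.sum_prod_type]
      rw [Finset.sum_eq_single j]
      · rw [Fintype.sum_prod_type]
        simp [Finset.mul_sum, Finset.sum_neg_distrib]
      · intro b _ hb
        exact Finset.sum_eq_zero fun y _ => by simp [hb]
      · intro hj; exact absurd (Finset.mem_univ j) hj
    simp only [mul_comm (d.ofLp _) (G0.ofLp _)]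
    rw [h1, h2]
    simp only [PiLp.proj_apply]
    ring
  have hgrad : gradient
      (fun θ' : Par c₀ c₁ c₂ nu nv =>
        (∑ k, ∑ t, (uFilt θ' k j t) ^ 2) - ∑ i, ∑ t, (vFilt θ' j i t) ^ 2) θ = G0 := by
    apply HasGradientAt.gradient
    rw [hasGradientAt_iff_hasFDerivAt, hLG0]
    exact hLd
  -- key computation : A G0 = 0
  have hU0 : ∀ (k : Fin c₂) (j' : Fin c₁) (t : ℕ),
      Ulin c₀ c₁ c₂ nu nv k j' t G0 =
        if j' = j then 2 * Ulin c₀ c₁ c₂ nu nv k j' t θ else 0 := by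
    intro k j' t
    unfold Ulin
    split
    · simp [hG0app]
    · simp
  have hV0 : ∀ (j' : Fin c₁) (i : Fin c₀) (t : ℕ),
      Vlin c₀ c₁ c₂ nu nv j' i t G0 =
        if j' = j then -(2 * Vlin c₀ c₁ c₂ nu nv j' i t θ) else 0 := by
    intro j' i t
    unfold Vlin
    split
    · simp [hG0app]
    · simp
  have hP0 : ∀ (j' : Fin c₁) (r : Fin p),
      Plin c₀ c₁ c₂ nu nv p x j' r G0 =
        if j' = j then -(2 * Plin c₀ c₁ c₂ nu nv p x j' r θ) else 0 := by
    intro j' r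
    unfold Plin
    simp only [ContinuousLinearMap.coe_sum', Finset.sum_apply,
      ContinuousLinearMap.coe_smul', Pi.smul_apply, smul_eq_mul, hV0]
    by_cases hj : j' = j
    · simp only [hj, eq_self_iff_true, if_true]
      rw [Finset.mul_sum, ← Finset.sum_neg_distrib]
      refine Finset.sum_congr rfl fun i _ => ?_
      rw [Finset.mul_sum, ← Finset.sum_neg_distrib]
      refine Finset.sum_congr rfl fun t _ => ?_
      ring
    · simp [hj]
  have hAG0 : A G0 = 0 := by
    rw [hA]
    have hz : ContinuousLinearMap.pi Dq G0 = (0 : (Fin c₂ × Fin p) → ℝ) := by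
      funext q
      rw [ContinuousLinearMap.pi_apply, hDq]
      simp only [ContinuousLinearMap.sum_apply, ContinuousLinearMap.add_apply,
        ContinuousLinearMap.smul_apply, smul_eq_mul, hU0, hP0]
      refine Finset.sum_eq_zero fun j' _ => Finset.sum_eq_zero fun t _ => ?_
      by_cases hj : j' = j
      · simp only [hj, eq_self_iff_true, if_true]
        ring
      · simp [hj]
    rw [ContinuousLinearMap.comp_apply, hz, map_zero]
  rw [hconv.fderiv, hgrad, real_inner_comm, ContinuousLinearMap.adjoint_inner_left, hAG0,
    inner_zero_right]
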